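/- Let H_1, ..., H_m be symmetric n×n matrices, all nonzero, such that for all v ∈ R^n the matrix with columns H_1 v, ..., H_m v has rank at most one. If H_1 e_1 = d e_1 with d ≠ 0 (after diagonalizing H_1), then every H_j has block form H_j = [[α_j, 0],[0, H_j']] with α_j ∈ R and H_j' symmetric of size (n−1)×(n−1). -/
import Mathlib


open scoped Matrix

/-- The key inductive step of the rank-one columns lemma: if the nonzero
symmetric matrices `H j` are such that the matrix with columns `H j *ᵥ v` has
rank at most one for all `v`, and `H 0` has `e₁` as an eigenvector with nonzero
eigenvalue `d`, then every `H j` has the block form `[[αⱼ, 0], [0, Hⱼ']]`. -/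
theorem rank_one_columns_block_form {n m : ℕ}
    (H : Fin (m + 1) → Matrix (Fin (n + 1)) (Fin (n + 1)) ℝ)
    (hsymm : ∀ j, (H j).IsSymm) (hne : ∀ j, H j ≠ 0)
    (hrank : ∀ v : Fin (n + 1) → ℝ,
      (Matrix.of fun (i : Fin (n + 1)) (j : Fin (m + 1)) => (H j *ᵥ v) i).rank ≤ 1)
    (d : ℝ) (hd : d ≠ 0)
    (heig : H 0 *ᵥ (Pi.single 0 1 : Fin (n + 1) → ℝ) = d • (Pi.single 0 1 : Fin (n + 1) → ℝ)) :
    ∃ α : Fin (m + 1) → ℝ, ∀ j, H j 0 0 = α j ∧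
      ∀ i : Fin (n + 1), i ≠ 0 → H j i 0 = 0 ∧ H j 0 i = 0 := by
  set e1 : Fin (n + 1) → ℝ := Pi.single 0 1 with he1
  set M : Matrix (Fin (n + 1)) (Fin (m + 1)) ℝ :=
    Matrix.of fun i j => (H j *ᵥ e1) i with hM
  have hr : Module.finrank ℝ (LinearMap.range M.mulVecLin) ≤ 1 := hrank e1
  obtain ⟨v, hv⟩ := (finrank_le_one_iff).mp hr
  have hcolmem : ∀ j, (H j *ᵥ e1) ∈ LinearMap.range M.mulVecLin := by
    intro j
    refine ⟨Pi.single j 1, ?_⟩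
    ext i
    simp [hM, Matrix.mulVecLin_apply]
  -- column 0 is d • e1, nonzero
  obtain ⟨c0, hc0⟩ := hv ⟨_, hcolmem 0⟩
  have hc0ne : c0 ≠ 0 := by
    intro h
    have := congrArg (Subtype.val) hc0
    rw [h, zero_smul] at this
    have h1 : (H 0 *ᵥ e1) 0 = 0 := by
      have h2 := (congrFun this 0).symm
      simpa using h2
    rw [heig] at h1
    simp [he1] at h1
    exact hd h1
  -- every column is a multiple of e1
  have key : ∀ j i, i ≠ (0 : Fin (n + 1)) → (H j *ᵥ e1) i = 0 := by
    intro j i hi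
    obtain ⟨c, hc⟩ := hv ⟨_, hcolmem j⟩
    have hcval : ∀ k, c • (v : Fin (n + 1) → ℝ) k = (H j *ᵥ e1) k := by
      intro k
      have := congrArg Subtype.val hc
      exact congrFun this k
    have hc0val : ∀ k, c0 • (v : Fin (n + 1) → ℝ) k = (H 0 *ᵥ e1) k := by
      intro k
      have := congrArg Subtype.val hc0
      exact congrFun this k
    have hvi : (v : Fin (n + 1) → ℝ) i = 0 := by
      have := hc0val i
      rw [heig] at this
      have h2 : (d • e1) i = 0 := by simp [he1, Pi.single_apply, hi]
      rw [h2] at this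
      have := mul_eq_zero.mp this
      rcases this with h | h
      · exact absurd h hc0ne
      · exact h
    have := hcval i
    rw [hvi] at this
    simpa using this.symm
  refine ⟨fun j => H j 0 0, fun j => ⟨rfl, fun i hi => ?_⟩⟩
  have h1 : H j i 0 = 0 := by
    have := key j i hi
    simpa [he1, Matrix.mulVec_single] using this
  refine ⟨h1, ?_⟩
  have := (hsymm j).apply i 0
  rw [← this] at h1
  exact h1
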